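/- For a partition $\alpha = (\alpha_1, \ldots, \alpha_a)$ with at most $a$ parts, the Schur polynomial of the conjugate partition satisfies the dual Giambelli formula: $\pi_{\bar{\alpha}} = \det\left[\varepsilon_{\alpha_i + j - i}\right]_{i,j=1}^{a}$, where $\varepsilon_m$ denotes the $m$-th elementary symmetric polynomial (with $\varepsilon_m = 0$ for $m < 0$). -/

import Mathlib

open MvPolynomial

/-- A partition: a weakly decreasing, eventually zero sequence of natural numbers
(indexed from 0). -/
structure Partn where
  parts : ℕ → ℕ
  antitone' : ∀ ⦃i j : ℕ⦄, i ≤ j → parts j ≤ parts i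
  finite' : ∃ N, ∀ i, N ≤ i → parts i = 0

/-- The weight `|α|` of a partition: the sum of its parts. -/
noncomputable def Partn.weight (μ : Partn) : ℕ := ∑ᶠ i, μ.parts i

/-- `α ∈ P(a,b)`: at most `a` parts, each part at most `b`. -/
def IsInP (a b : ℕ) (α : Partn) : Prop :=
  (∀ i, a ≤ i → α.parts i = 0) ∧ (∀ i, α.parts i ≤ b)

/-- The conjugate (transpose) partition. -/
noncomputable def Partn.conj (μ : Partn) : Partn where
  parts j := Set.ncard {i : ℕ | j < μ.parts i}
  antitone' := by
    intro j k hjk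
    apply Set.ncard_le_ncard
    · intro i hi
      simp only [Set.mem_setOf_eq] at hi ⊢
      exact lt_of_le_of_lt hjk hi
    · obtain ⟨N, hN⟩ := μ.finite'
      apply Set.Finite.subset (Set.finite_Iio N)
      intro i hi
      simp only [Set.mem_setOf_eq] at hi
      simp only [Set.mem_Iio]
      by_contra h
      push_neg at h
      rw [hN i h] at hi
      exact Nat.not_lt_zero _ hi
  finite' := by
    refine ⟨μ.parts 0, fun j hj => ?_⟩
    have h : {i : ℕ | j < μ.parts i} = ∅ := by
      ext i
      simp only [Set.mem_setOf_eq, Set.mem_empty_iff_false, iff_false, not_lt]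
      exact le_trans (μ.antitone' (Nat.zero_le i)) hj
    try simp only []
    rw [h, Set.ncard_empty]

/-- The rectangular partition `K_{a,b} = (b,…,b)` with `a` parts. -/
def Partn.rect (a b : ℕ) : Partn where
  parts i := if i < a then b else 0
  antitone' := by
    intro i j hij
    by_cases hj : j < a
    · simp [hj, lt_of_le_of_lt hij hj]
    · simp [hj]
  finite' := ⟨a, fun i hi => by simp [Nat.not_lt.2 hi]⟩

/-- The complement `K_{a,b} - γ = (b - γ_a, …, b - γ_1)` of `γ` in the
`a × b` rectangle. -/
def Partn.compl (a b : ℕ) (γ : Partn) : Partn where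
  parts i := if i < a then b - γ.parts (a - 1 - i) else 0
  antitone' := by
    intro i j hij
    by_cases hj : j < a
    · have hi : i < a := lt_of_le_of_lt hij hj
      simp only [hi, hj, if_true]
      exact Nat.sub_le_sub_left (γ.antitone' (by omega)) b
    · simp [hj]
  finite' := ⟨a, fun i hi => by simp [Nat.not_lt.2 hi]⟩

/-- The partition `ν + K_{a,b} = (ν_1 + b, …, ν_a + b)`. -/
def Partn.addRect (a b : ℕ) (ν : Partn) : Partn where
  parts i := ν.parts i + (if i < a then b else 0)
  antitone' := by
    intro i j hij
    have h1 := ν.antitone' hij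
    by_cases hj : j < a
    · simp only [hj, lt_of_le_of_lt hij hj, if_true]
      omega
    · by_cases hi : i < a <;> simp only [hi, hj, if_true, if_false] <;> omega
  finite' := by
    obtain ⟨N, hN⟩ := ν.finite'
    exact ⟨N + a, fun i hi => by simp [hN i (by omega), Nat.not_lt.2 (by omega : a ≤ i)]⟩

/-- `T : ℕ → ℕ → ℕ` is a semistandard Young tableau of shape `μ` with
entries in `{0, …, n-1}` (and value `0` outside the shape): rows weakly
increase, columns strictly increase. -/
def IsSSYT (μ : Partn) (n : ℕ) (T : ℕ → ℕ → ℕ) : Prop :=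
  (∀ i j, j < μ.parts i → T i j < n) ∧
  (∀ i j k, j ≤ k → k < μ.parts i → T i j ≤ T i k) ∧
  (∀ i i' j, i < i' → j < μ.parts i' → T i j < T i' j) ∧
  (∀ i j, μ.parts i ≤ j → T i j = 0)

open Classical in
/-- The Schur polynomial of `μ` in `n` variables, defined combinatorially as the
generating function of semistandard Young tableaux of shape `μ` with entries in
`{0, …, n-1}`. -/
noncomputable def schur (n : ℕ) (μ : Partn) : MvPolynomial (Fin n) ℤ :=
  ∑ᶠ T : ℕ → ℕ → ℕ, if IsSSYT μ n T then
    ∏ k : Fin n, X k ^ (Set.ncard {p : ℕ × ℕ | p.2 < μ.parts p.1 ∧ T p.1 p.2 = (k : ℕ)})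
  else 0

/-- The alternant `a_{f+δ} = ∑_σ sgn(σ) ∏_i x_i^{(f+δ)_{σ(i)}}` in `n` variables,
where `δ = (n-1, n-2, …, 0)`. -/
noncomputable def alternant (n : ℕ) (f : ℕ → ℕ) : MvPolynomial (Fin n) ℤ :=
  ∑ σ : Equiv.Perm (Fin n),
    (Equiv.Perm.sign σ : ℤ) • ∏ i : Fin n, X i ^ (f (σ i) + (n - 1 - (σ i : ℕ)))

/-- The Littlewood–Richardson coefficient `c_{α,β}^γ`, defined by the Schur
expansion `s_α s_β = ∑_γ c_{α,β}^γ s_γ` in the ring of symmetric functions;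
equivalently (as here) `c_{α,β}^γ` is the coefficient of `x^{γ+δ}` in
`s_α ⬝ a_{β+δ}` in sufficiently many variables. -/
noncomputable def LR (α β γ : Partn) : ℤ :=
  MvPolynomial.coeff
    (Finsupp.equivFunOnFinite.symm
      fun i : Fin (α.weight + β.weight + 1) =>
        γ.parts i + (α.weight + β.weight + 1 - 1 - (i : ℕ)))
    (schur (α.weight + β.weight + 1) α * alternant (α.weight + β.weight + 1) β.parts)

/-- The multi-Littlewood–Richardson coefficient `c_{α,β,γ}^λ`, defined by
`s_α s_β s_γ = ∑_λ c_{α,β,γ}^λ s_λ`. -/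
noncomputable def LR3 (α β γ lam : Partn) : ℤ :=
  MvPolynomial.coeff
    (Finsupp.equivFunOnFinite.symm
      fun i : Fin (α.weight + β.weight + γ.weight + 1) =>
        lam.parts i + (α.weight + β.weight + γ.weight + 1 - 1 - (i : ℕ)))
    (schur (α.weight + β.weight + γ.weight + 1) α *
      schur (α.weight + β.weight + γ.weight + 1) β *
      alternant (α.weight + β.weight + γ.weight + 1) γ.parts)

/-- The skew Schur polynomial `s_{λ/μ} = ∑_ψ c_{μ,ψ}^λ s_ψ` in `n` variables. -/
noncomputable def skewSchur (n : ℕ) (lam mu : Partn) : MvPolynomial (Fin n) ℤ :=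
  ∑ᶠ ψ : Partn, LR mu ψ lam • schur n ψ

/-- The `m`-th elementary symmetric polynomial in `n` variables, indexed by an
integer, with `ε_m = 0` for `m < 0`. -/
noncomputable def esymmZ (n : ℕ) (m : ℤ) : MvPolynomial (Fin n) ℤ :=
  if 0 ≤ m then MvPolynomial.esymm (Fin n) ℤ m.toNat else 0


section GiamAuxLemmas
open Finset

lemma giam_dcs_nat {s : Finset ℕ} (h : ∀ ⦃i j : ℕ⦄, i ≤ j → j ∈ s → i ∈ s) {j : ℕ} :
    j ∈ s ↔ j < s.card := by
  constructor
  · intro hj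
    have hsub : Finset.range (j + 1) ⊆ s := fun k hk =>
      h (Nat.lt_succ_iff.mp (Finset.mem_range.mp hk)) hj
    have := Finset.card_le_card hsub
    rw [Finset.card_range] at this; omega
  · intro hc
    by_contra hj
    have hsub : s ⊆ Finset.range j := by
      intro k hk
      rw [Finset.mem_range]
      by_contra hkj
      push_neg at hkj
      exact hj (h hkj hk)
    have := Finset.card_le_card hsub
    rw [Finset.card_range] at this; omega

lemma giam_dcs_fin {q : ℕ} {s : Finset (Fin q)} (h : ∀ ⦃i j : Fin q⦄, i ≤ j → j ∈ s → i ∈ s)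
    (j : Fin q) : j ∈ s ↔ (j : ℕ) < s.card := by
  have himg : ∀ ⦃i k : ℕ⦄, i ≤ k → k ∈ s.image Fin.val → i ∈ s.image Fin.val := by
    intro i k hik hk
    rw [Finset.mem_image] at hk ⊢
    obtain ⟨b, hb, rfl⟩ := hk
    exact ⟨⟨i, lt_of_le_of_lt hik b.isLt⟩, h (by exact hik) hb, rfl⟩
  have h2 := giam_dcs_nat himg (j := (j : ℕ))
  rw [Finset.card_image_of_injective _ Fin.val_injective, Finset.mem_image] at h2
  rw [← h2]
  constructor
  · intro hj; exact ⟨j, hj, rfl⟩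
  · rintro ⟨b, hb, hbj⟩; rwa [Fin.val_injective hbj] at hb

lemma giam_count_iff {n q : ℕ} {s : Finset (Fin n)} (h : s.card = q) (t : ℕ) (j : Fin q) :
    ((s.orderEmbOfFin h j : Fin n) : ℕ) < t ↔
      (j : ℕ) < (s.filter (fun x : Fin n => (x : ℕ) < t)).card := by
  classical
  set e := s.orderEmbOfFin h with he
  have himg : s.filter (fun x : Fin n => (x : ℕ) < t) =
      (univ.filter (fun i : Fin q => ((e i : Fin n) : ℕ) < t)).image e := by
    ext x
    simp only [mem_filter, mem_image, mem_univ, true_and]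
    constructor
    · rintro ⟨hx, hxt⟩
      have hx' : x ∈ Set.range e := by
        rw [he, Finset.range_orderEmbOfFin]; exact hx
      obtain ⟨i, rfl⟩ := hx'
      exact ⟨i, hxt, rfl⟩
    · rintro ⟨i, hit, rfl⟩
      exact ⟨Finset.orderEmbOfFin_mem s h i, hit⟩
  rw [himg, Finset.card_image_of_injective _ (s.orderEmbOfFin h).injective]
  have hdc : ∀ ⦃i k : Fin q⦄, i ≤ k →
      k ∈ univ.filter (fun i : Fin q => ((e i : Fin n) : ℕ) < t) →
      i ∈ univ.filter (fun i : Fin q => ((e i : Fin n) : ℕ) < t) := by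
    intro i k hik hk
    simp only [mem_filter, mem_univ, true_and] at hk ⊢
    exact lt_of_le_of_lt (by exact_mod_cast (s.orderEmbOfFin h).monotone hik) hk
  have := giam_dcs_fin hdc j
  simp only [mem_filter, mem_univ, true_and] at this
  exact this

lemma giam_comp_of_count {n p q : ℕ} {sA sB : Finset (Fin n)} (hA : sA.card = p)
    (hB : sB.card = q) (hq : q ≤ p)
    (hcnt : ∀ t, (sB.filter fun x : Fin n => (x : ℕ) < t).card ≤ (sA.filter fun x : Fin n => (x : ℕ) < t).card)
    (r : ℕ) (hrq : r < q) :
    ((sA.orderEmbOfFin hA ⟨r, hrq.trans_le hq⟩ : Fin n) : ℕ) ≤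
      (sB.orderEmbOfFin hB ⟨r, hrq⟩ : Fin n) := by
  by_contra hlt
  push_neg at hlt
  set b := (sB.orderEmbOfFin hB ⟨r, hrq⟩ : Fin n) with hb
  have h1 : (r : ℕ) < (sB.filter fun x : Fin n => (x : ℕ) < (b : ℕ) + 1).card := by
    have := (giam_count_iff hB ((b : ℕ) + 1) ⟨r, hrq⟩).mp (by omega)
    simpa using this
  have h2 := h1.trans_le (hcnt _)
  have h3 := (giam_count_iff hA ((b : ℕ) + 1) ⟨r, hrq.trans_le hq⟩).mpr (by simpa using h2)
  omega

lemma giam_count_of_comp {n p q : ℕ} {sA sB : Finset (Fin n)} (hA : sA.card = p)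
    (hB : sB.card = q) (hq : q ≤ p)
    (hcomp : ∀ (r : ℕ) (hrq : r < q),
      ((sA.orderEmbOfFin hA ⟨r, hrq.trans_le hq⟩ : Fin n) : ℕ) ≤
        (sB.orderEmbOfFin hB ⟨r, hrq⟩ : Fin n)) :
    ∀ t, (sB.filter fun x : Fin n => (x : ℕ) < t).card ≤ (sA.filter fun x : Fin n => (x : ℕ) < t).card := by
  classical
  intro t
  set m := (sB.filter fun x : Fin n => (x : ℕ) < t).card with hm
  rcases Nat.eq_zero_or_pos m with h0 | hpos
  · omega
  have hmq : m ≤ q := by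
    rw [hm, ← hB]; exact Finset.card_filter_le _ _
  have hr : m - 1 < q := by omega
  have hbt : ((sB.orderEmbOfFin hB ⟨m - 1, hr⟩ : Fin n) : ℕ) < t := by
    apply (giam_count_iff hB t ⟨m - 1, hr⟩).mpr
    simp only [← hm]; omega
  have h2 := (hcomp (m - 1) hr).trans_lt hbt
  have h3 := (giam_count_iff hA t ⟨m - 1, hr.trans_le hq⟩).mp h2
  simp only at h3; omega

lemma giam_conj_lt_iff (μ : Partn) (i j : ℕ) :
    j < (Partn.conj μ).parts i ↔ i < μ.parts j := by
  have hfin : {k : ℕ | i < μ.parts k}.Finite := by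
    obtain ⟨N, hN⟩ := μ.finite'
    apply Set.Finite.subset (Set.finite_Iio N)
    intro k hk
    simp only [Set.mem_setOf_eq] at hk
    simp only [Set.mem_Iio]
    by_contra hkN
    push_neg at hkN
    rw [hN k hkN] at hk
    omega
  have hcard : (Partn.conj μ).parts i = hfin.toFinset.card := by
    show Set.ncard _ = _
    rw [← Set.ncard_coe_finset hfin.toFinset, Set.Finite.coe_toFinset]
  rw [hcard]
  have hdc : ∀ ⦃k l : ℕ⦄, k ≤ l → l ∈ hfin.toFinset → k ∈ hfin.toFinset := by
    intro k l hkl hl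
    simp only [Set.Finite.mem_toFinset, Set.mem_setOf_eq] at hl ⊢
    exact lt_of_lt_of_le hl (μ.antitone' hkl)
  have := (giam_dcs_nat hdc (j := j)).symm
  rw [this, Set.Finite.mem_toFinset, Set.mem_setOf_eq]

end GiamAuxLemmas

namespace GiamAux
open Finset

def cnt {n : ℕ} (s : Finset (Fin n)) (t : ℕ) : ℕ := (s.filter fun x : Fin n => (x : ℕ) < t).card

def dnt {n : ℕ} (s : Finset (Fin n)) (t : ℕ) : ℕ := (s.filter fun x : Fin n => ¬ (x : ℕ) < t).card

variable (n a : ℕ) (α : Partn)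

def ChainF (S : Fin a → Finset (Fin n)) : Prop :=
  (∀ i, (S i).card = α.parts i) ∧
  ∀ i j : Fin a, i ≤ j → ∀ t, cnt (S j) t ≤ cnt (S i) t

noncomputable def weightF (S : Fin a → Finset (Fin n)) : MvPolynomial (Fin n) ℤ :=
  ∏ i : Fin a, ∏ x ∈ S i, MvPolynomial.X x

def tabOf (S : Fin a → Finset (Fin n)) : ℕ → ℕ → ℕ := fun r c =>
  if hc : c < a then
    if h : r < α.parts c ∧ (S ⟨c, hc⟩).card = α.parts c then
      (((S ⟨c, hc⟩).orderEmbOfFin h.2) ⟨r, h.1⟩ : Fin n)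
    else 0
  else 0

variable {n a α}

lemma tabOf_apply {S : Fin a → Finset (Fin n)} (hS : ∀ i, (S i).card = α.parts i)
    {r c : ℕ} (hc : c < a) (hr : r < α.parts c) :
    tabOf n a α S r c = (((S ⟨c, hc⟩).orderEmbOfFin (hS ⟨c, hc⟩)) ⟨r, hr⟩ : Fin n) := by
  rw [tabOf, dif_pos hc, dif_pos ⟨hr, hS ⟨c, hc⟩⟩]

lemma tabOf_ssyt (hα : ∀ i, a ≤ i → α.parts i = 0) {S : Fin a → Finset (Fin n)}
    (hS : ChainF n a α S) : IsSSYT (Partn.conj α) n (tabOf n a α S) := by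
  have hcard := hS.1
  have hcell : ∀ r c : ℕ, c < (Partn.conj α).parts r ↔ r < α.parts c :=
    fun r c => giam_conj_lt_iff α r c
  have hlta : ∀ c r : ℕ, r < α.parts c → c < a := by
    intro c r h
    by_contra hc
    push_neg at hc
    rw [hα c hc] at h; omega
  refine ⟨?_, ?_, ?_, ?_⟩
  · -- entries < n
    intro r c hrc
    rw [hcell] at hrc
    have hc := hlta c r hrc
    rw [tabOf_apply hcard hc hrc]
    exact (((S ⟨c, hc⟩).orderEmbOfFin (hcard ⟨c, hc⟩)) ⟨r, hrc⟩).isLt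
  · -- rows weakly increase
    intro r c c' hcc' hc'
    rw [hcell] at hc'
    have hc'a := hlta c' r hc'
    have hca := hlta c r (lt_of_lt_of_le hc' (α.antitone' hcc'))
    have hrc : r < α.parts c := lt_of_lt_of_le hc' (α.antitone' hcc')
    rw [tabOf_apply hcard hca hrc, tabOf_apply hcard hc'a hc']
    exact giam_comp_of_count (hcard ⟨c, hca⟩) (hcard ⟨c', hc'a⟩) (α.antitone' hcc')
      (hS.2 ⟨c, hca⟩ ⟨c', hc'a⟩ (by exact hcc') ) r hc'
  · -- columns strictly increase
    intro r r' c hrr' hr'c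
    rw [hcell] at hr'c
    have hca := hlta c r' hr'c
    have hrc : r < α.parts c := lt_trans hrr' hr'c
    rw [tabOf_apply hcard hca hrc, tabOf_apply hcard hca hr'c]
    have := ((S ⟨c, hca⟩).orderEmbOfFin (hcard ⟨c, hca⟩)).strictMono
      (show (⟨r, hrc⟩ : Fin (α.parts c)) < ⟨r', hr'c⟩ from hrr')
    exact_mod_cast this
  · -- zero outside
    intro r c hcr
    rw [tabOf]
    split
    · next hc =>
      rw [dif_neg]
      intro h
      rw [← hcell] at h
      omega
    · rfl

lemma tabOf_inj {S S' : Fin a → Finset (Fin n)} (hS : ∀ i, (S i).card = α.parts i)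
    (hS' : ∀ i, (S' i).card = α.parts i)
    (h : tabOf n a α S = tabOf n a α S') : S = S' := by
  funext i
  have hemb : ∀ r : Fin (α.parts i.val),
      (S i).orderEmbOfFin (hS i) r = (S' i).orderEmbOfFin (hS' i) r := by
    intro r
    have h1 := tabOf_apply hS i.isLt r.isLt
    have h2 := tabOf_apply hS' i.isLt r.isLt
    rw [h] at h1
    have := h1.symm.trans h2
    exact Fin.val_injective this
  ext x
  have h1 : x ∈ S i ↔ x ∈ Set.range ((S i).orderEmbOfFin (hS i)) := by
    rw [Finset.range_orderEmbOfFin]; rfl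
  have h2 : x ∈ S' i ↔ x ∈ Set.range ((S' i).orderEmbOfFin (hS' i)) := by
    rw [Finset.range_orderEmbOfFin]; rfl
  rw [h1, h2]
  constructor
  · rintro ⟨r, rfl⟩; exact ⟨r, (hemb r).symm⟩
  · rintro ⟨r, rfl⟩; exact ⟨r, hemb r⟩

lemma tabOf_surj (hα : ∀ i, a ≤ i → α.parts i = 0) {T : ℕ → ℕ → ℕ}
    (hT : IsSSYT (Partn.conj α) n T) :
    ∃ S : Fin a → Finset (Fin n), ChainF n a α S ∧ tabOf n a α S = T := by
  have hcell : ∀ r c : ℕ, c < (Partn.conj α).parts r ↔ r < α.parts c :=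
    fun r c => giam_conj_lt_iff α r c
  set fc : ∀ c : Fin a, Fin (α.parts c.val) → Fin n := fun c r =>
    ⟨T r.val c.val, hT.1 r.val c.val ((hcell r.val c.val).mpr r.isLt)⟩ with hfc
  have hmono : ∀ c : Fin a, StrictMono (fc c) := by
    intro c r r' hrr'
    have := hT.2.2.1 r.val r'.val c.val hrr' ((hcell r'.val c.val).mpr r'.isLt)
    exact this
  set S : Fin a → Finset (Fin n) := fun c => Finset.image (fc c) Finset.univ with hSdef
  have hcardS : ∀ c, (S c).card = α.parts c.val := by
    intro c
    rw [hSdef]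
    rw [Finset.card_image_of_injective _ (hmono c).injective, Finset.card_univ, Fintype.card_fin]
  have hemb : ∀ c : Fin a, fc c = ⇑((S c).orderEmbOfFin (hcardS c)) := by
    intro c
    exact Finset.orderEmbOfFin_unique (hcardS c)
      (fun r => Finset.mem_image_of_mem _ (Finset.mem_univ r)) (hmono c)
  refine ⟨S, ⟨fun i => hcardS i, ?_⟩, ?_⟩
  · intro i j hij t
    apply giam_count_of_comp (hcardS i) (hcardS j) (α.antitone' (by exact_mod_cast hij))
    intro r hrq
    have e1 : ((S i).orderEmbOfFin (hcardS i) ⟨r, hrq.trans_le (α.antitone' (by exact_mod_cast hij))⟩ : Fin n) =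
        fc i ⟨r, hrq.trans_le (α.antitone' (by exact_mod_cast hij))⟩ := by rw [hemb i]
    have e2 : ((S j).orderEmbOfFin (hcardS j) ⟨r, hrq⟩ : Fin n) = fc j ⟨r, hrq⟩ := by rw [hemb j]
    rw [e1, e2]
    show T r i.val ≤ T r j.val
    exact hT.2.1 r i.val j.val (by exact_mod_cast hij) ((hcell r j.val).mpr hrq)
  · funext r c
    by_cases hc : c < a
    · by_cases hr : r < α.parts c
      · rw [tabOf_apply (fun i => hcardS i) hc hr]
        have : ((S ⟨c, hc⟩).orderEmbOfFin (hcardS ⟨c, hc⟩) ⟨r, hr⟩ : Fin n) = fc ⟨c, hc⟩ ⟨r, hr⟩ := by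
          rw [hemb ⟨c, hc⟩]
        rw [this]
      · have hz : T r c = 0 := hT.2.2.2 r c (by rw [← not_lt, hcell]; exact hr)
        rw [hz, tabOf, dif_pos hc, dif_neg]
        intro hcon
        exact hr hcon.1
    · have hz : T r c = 0 := hT.2.2.2 r c (by rw [← not_lt, hcell]; intro h; exact hc (by
        by_contra hca; push_neg at hca; rw [hα c hca] at h; omega))
      rw [hz, tabOf, dif_neg hc]

lemma tabOf_monomial (hα : ∀ i, a ≤ i → α.parts i = 0) {S : Fin a → Finset (Fin n)}
    (hS : ∀ i, (S i).card = α.parts i) :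
    (∏ k : Fin n, (MvPolynomial.X k : MvPolynomial (Fin n) ℤ) ^
      (Set.ncard {p : ℕ × ℕ | p.2 < (Partn.conj α).parts p.1 ∧
        tabOf n a α S p.1 p.2 = (k : ℕ)})) = weightF n a S := by
  classical
  have hcell : ∀ r c : ℕ, c < (Partn.conj α).parts r ↔ r < α.parts c :=
    fun r c => giam_conj_lt_iff α r c
  set T := tabOf n a α S with hT
  set cellF : Finset (ℕ × ℕ) :=
    (Finset.range (α.parts 0) ×ˢ Finset.range a).filter (fun p => p.1 < α.parts p.2) with hcellF
  have hmemF : ∀ p : ℕ × ℕ, p ∈ cellF ↔ (p.2 < a ∧ p.1 < α.parts p.2) := by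
    intro p
    rw [hcellF, Finset.mem_filter, Finset.mem_product, Finset.mem_range, Finset.mem_range]
    constructor
    · rintro ⟨⟨_, h2⟩, h3⟩; exact ⟨h2, h3⟩
    · rintro ⟨h2, h3⟩
      exact ⟨⟨lt_of_lt_of_le h3 (α.antitone' (Nat.zero_le _)), h2⟩, h3⟩
  have hset : ∀ k : Fin n,
      {p : ℕ × ℕ | p.2 < (Partn.conj α).parts p.1 ∧ T p.1 p.2 = (k : ℕ)} =
        ↑(cellF.filter (fun p => T p.1 p.2 = (k : ℕ))) := by
    intro k
    ext p
    simp only [Set.mem_setOf_eq, Finset.coe_filter, hmemF]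
    constructor
    · rintro ⟨h1, h2⟩
      rw [hcell] at h1
      refine ⟨⟨?_, h1⟩, h2⟩
      by_contra hc; push_neg at hc
      rw [hα p.2 hc] at h1; omega
    · rintro ⟨⟨h1, h2⟩, h3⟩
      exact ⟨(hcell p.1 p.2).mpr h2, h3⟩
  have hTn : ∀ q : {x // x ∈ cellF}, T q.1.1 q.1.2 < n := by
    rintro ⟨p, hp⟩
    rw [hmemF] at hp
    rw [hT, tabOf_apply hS hp.1 hp.2]
    exact (((S ⟨p.2, hp.1⟩).orderEmbOfFin (hS ⟨p.2, hp.1⟩)) ⟨p.1, hp.2⟩).isLt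
  set gv : {x // x ∈ cellF} → Fin n := fun q => ⟨T q.1.1 q.1.2, hTn q⟩ with hgv
  -- step 1 : LHS = ∏ over attach of X (gv q)
  have step1 : (∏ k : Fin n, (MvPolynomial.X k : MvPolynomial (Fin n) ℤ) ^
      (Set.ncard {p : ℕ × ℕ | p.2 < (Partn.conj α).parts p.1 ∧ T p.1 p.2 = (k : ℕ)})) =
      ∏ q ∈ cellF.attach, (MvPolynomial.X (gv q) : MvPolynomial (Fin n) ℤ) := by
    rw [← Finset.prod_fiberwise_of_maps_to (t := (Finset.univ : Finset (Fin n)))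
      (g := gv) (fun q _ => Finset.mem_univ _) (fun q => (MvPolynomial.X (gv q) : MvPolynomial (Fin n) ℤ))]
    apply Finset.prod_congr rfl
    intro k _
    have hinner : ∏ q ∈ cellF.attach.filter (fun q => gv q = k),
        (MvPolynomial.X (gv q) : MvPolynomial (Fin n) ℤ) =
        ∏ _q ∈ cellF.attach.filter (fun q => gv q = k), (MvPolynomial.X k : MvPolynomial (Fin n) ℤ) := by
      apply Finset.prod_congr rfl
      intro q hq
      rw [(Finset.mem_filter.mp hq).2]
    rw [hinner, Finset.prod_const]
    congr 1
    rw [hset k, Set.ncard_coe_finset]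
    symm
    apply Finset.card_bij (fun (q : {x // x ∈ cellF}) _ => q.1)
    · intro q hq
      rw [Finset.mem_filter] at hq ⊢
      refine ⟨q.2, ?_⟩
      have := hq.2
      rw [hgv] at this
      exact congrArg Fin.val this
    · intro q1 h1 q2 h2 he
      exact Subtype.ext he
    · intro p hp
      rw [Finset.mem_filter] at hp
      refine ⟨⟨p, hp.1⟩, ?_, rfl⟩
      rw [Finset.mem_filter]
      refine ⟨Finset.mem_attach _ _, ?_⟩
      rw [hgv]
      exact Fin.val_injective hp.2
  rw [step1]
  -- step 2 : ∏ over attach = weightF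
  have hcol : ∀ q : {x // x ∈ cellF}, q.1.2 < a := fun q => ((hmemF q.1).mp q.2).1
  set colOf : {x // x ∈ cellF} → Fin a := fun q => ⟨q.1.2, hcol q⟩ with hcolOf
  rw [← Finset.prod_fiberwise_of_maps_to (t := (Finset.univ : Finset (Fin a)))
    (g := colOf) (fun q _ => Finset.mem_univ _) (fun q => (MvPolynomial.X (gv q) : MvPolynomial (Fin n) ℤ))]
  rw [weightF]
  apply Finset.prod_congr rfl
  intro c _
  have hSimg : S c = Finset.image (⇑((S c).orderEmbOfFin (hS c))) Finset.univ := by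
    ext x
    simp only [Finset.mem_image, Finset.mem_univ, true_and]
    constructor
    · intro hx
      have : x ∈ Set.range ((S c).orderEmbOfFin (hS c)) := by
        rw [Finset.range_orderEmbOfFin]; exact hx
      exact this
    · rintro ⟨r, rfl⟩
      exact Finset.orderEmbOfFin_mem _ _ _
  rw [hSimg, Finset.prod_image (fun x _ y _ h => ((S c).orderEmbOfFin (hS c)).injective h)]
  apply Finset.prod_bij (fun (q : {x // x ∈ cellF}) (hq : q ∈ cellF.attach.filter (fun q => colOf q = c)) =>
    (⟨q.1.1, by
      have h2 := ((hmemF q.1).mp q.2).2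
      have h3 : q.1.2 = c.val := congrArg Fin.val (Finset.mem_filter.mp hq).2
      rw [h3] at h2
      exact h2⟩ : Fin (α.parts c.val)))
  · intro q hq; exact Finset.mem_univ _
  · intro q1 h1 q2 h2 he
    have e1 : q1.1.1 = q2.1.1 := congrArg Fin.val he
    have e2 : q1.1.2 = q2.1.2 := by
      have a1 : q1.1.2 = (c : ℕ) := congrArg Fin.val (Finset.mem_filter.mp h1).2
      have a2 : q2.1.2 = (c : ℕ) := congrArg Fin.val (Finset.mem_filter.mp h2).2
      exact a1.trans a2.symm
    exact Subtype.ext (Prod.ext e1 e2)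
  · intro r _
    have hmem : ((r : ℕ), (c : ℕ)) ∈ cellF := (hmemF _).mpr ⟨c.isLt, r.isLt⟩
    refine ⟨⟨((r : ℕ), (c : ℕ)), hmem⟩, ?_, rfl⟩
    rw [Finset.mem_filter]
    exact ⟨Finset.mem_attach _ _, rfl⟩
  · intro q hq
    congr 1
    apply Fin.val_injective
    show (gv q : ℕ) = _
    rw [hgv]
    show T q.1.1 q.1.2 = _
    have h3 : q.1.2 = c.val := congrArg Fin.val (Finset.mem_filter.mp hq).2
    have h2 := ((hmemF q.1).mp q.2).2
    rw [h3] at h2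
    have h4 : T q.1.1 q.1.2 = T q.1.1 (c : ℕ) := by rw [h3]
    rw [h4, hT, tabOf_apply hS c.isLt h2]

variable (n a α)

noncomputable def chainFinset : Finset (Fin a → Finset (Fin n)) := by
  classical exact Finset.univ.filter (ChainF n a α)

lemma mem_chainFinset {S : Fin a → Finset (Fin n)} :
    S ∈ chainFinset n a α ↔ ChainF n a α S := by
  rw [chainFinset]
  simp only [Finset.mem_filter, Finset.mem_univ, true_and]

lemma schur_eq (hα : ∀ i, a ≤ i → α.parts i = 0) :
    schur n (Partn.conj α) = ∑ S ∈ chainFinset n a α, weightF n a S := by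
  classical
  rw [schur]
  have hsupp : (Function.support fun T : ℕ → ℕ → ℕ =>
      if IsSSYT (Partn.conj α) n T then
        ∏ k : Fin n, (MvPolynomial.X k : MvPolynomial (Fin n) ℤ) ^
          (Set.ncard {p : ℕ × ℕ | p.2 < (Partn.conj α).parts p.1 ∧ T p.1 p.2 = (k : ℕ)})
      else 0) ⊆ ↑((chainFinset n a α).image (tabOf n a α)) := by
    intro T hT0
    rw [Function.mem_support] at hT0
    by_cases hssyt : IsSSYT (Partn.conj α) n T
    · obtain ⟨S, hSchain, rfl⟩ := tabOf_surj hα hssyt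
      rw [Finset.coe_image]
      exact ⟨S, by rw [Finset.mem_coe, mem_chainFinset n a α]; exact hSchain, rfl⟩
    · exact absurd (if_neg hssyt) hT0
  rw [finsum_eq_sum_of_support_subset _ hsupp]
  rw [Finset.sum_image (fun x hx y hy hxy =>
    tabOf_inj ((mem_chainFinset n a α).mp hx).1 ((mem_chainFinset n a α).mp hy).1 hxy)]
  apply Finset.sum_congr rfl
  intro S hS
  rw [mem_chainFinset n a α] at hS
  rw [if_pos (tabOf_ssyt hα hS)]
  exact tabOf_monomial hα hS.1

lemma giam_prod_ite_all {ι R : Type*} [Fintype ι] [CommMonoidWithZero R]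
    (P : ι → Prop) [DecidablePred P] (f : ι → R) :
    (∏ i, if P i then f i else 0) = if (∀ i, P i) then ∏ i, f i else 0 := by
  by_cases h : ∀ i, P i
  · rw [if_pos h]
    exact Finset.prod_congr rfl fun i _ => if_pos (h i)
  · rw [if_neg h]
    push_neg at h
    obtain ⟨i0, hi0⟩ := h
    exact Finset.prod_eq_zero (Finset.mem_univ i0) (if_neg hi0)

lemma esymmZ_expand (m : ℤ) :
    esymmZ n m = ∑ s : Finset (Fin n),
      if ((s.card : ℤ) = m) then ∏ x ∈ s, MvPolynomial.X x else (0 : MvPolynomial (Fin n) ℤ) := by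
  classical
  rw [esymmZ]
  by_cases hm : 0 ≤ m
  · rw [if_pos hm, MvPolynomial.esymm, Finset.powersetCard_eq_filter, Finset.sum_filter,
      Finset.powerset_univ]
    apply Finset.sum_congr rfl
    intro s _
    apply if_congr _ rfl rfl
    omega
  · rw [if_neg hm]
    symm
    apply Finset.sum_eq_zero
    intro s _
    rw [if_neg]
    intro h
    omega

def Cons (σ : Equiv.Perm (Fin a)) (S : Fin a → Finset (Fin n)) : Prop :=
  ∀ i : Fin a, ((S i).card : ℤ) = (α.parts i : ℤ) + ((σ i : ℕ) : ℤ) - ((i : ℕ) : ℤ)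

noncomputable def FF (p : Equiv.Perm (Fin a) × (Fin a → Finset (Fin n))) :
    MvPolynomial (Fin n) ℤ := by
  classical exact ((Equiv.Perm.sign p.1 : ℤ) : MvPolynomial (Fin n) ℤ) *
    (if Cons n a α p.1 p.2 then weightF n a p.2 else 0)

lemma det_eq :
    Matrix.det (Matrix.of fun i j : Fin a =>
        esymmZ n ((α.parts i : ℤ) + (j : ℕ) - (i : ℕ))) =
      ∑ p ∈ (Finset.univ ×ˢ Finset.univ :
          Finset (Equiv.Perm (Fin a) × (Fin a → Finset (Fin n)))), FF n a α p := by
  classical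
  rw [← Matrix.det_transpose, Matrix.det_apply', Finset.sum_product]
  apply Finset.sum_congr rfl
  intro σ _
  have h1 : ∏ i : Fin a, (Matrix.of fun i j : Fin a =>
      esymmZ n ((α.parts i : ℤ) + (j : ℕ) - (i : ℕ))).transpose (σ i) i =
      ∏ i : Fin a, ∑ s : Finset (Fin n),
        (if ((s.card : ℤ) = (α.parts i : ℤ) + ((σ i : ℕ) : ℤ) - ((i : ℕ) : ℤ)) then
          ∏ x ∈ s, MvPolynomial.X x else (0 : MvPolynomial (Fin n) ℤ)) := by
    apply Finset.prod_congr rfl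
    intro i _
    rw [Matrix.transpose_apply, Matrix.of_apply]
    exact esymmZ_expand n _
  rw [h1, Finset.prod_univ_sum, Fintype.piFinset_univ, Finset.mul_sum]
  apply Finset.sum_congr rfl
  intro S _
  rw [FF]
  congr 1
  rw [giam_prod_ite_all (fun i : Fin a =>
    ((S i).card : ℤ) = (α.parts i : ℤ) + ((σ i : ℕ) : ℤ) - ((i : ℕ) : ℤ))
    (fun i => ∏ x ∈ S i, MvPolynomial.X x)]
  rw [show Cons n a α (σ, S).1 (σ, S).2 ↔
    (∀ i : Fin a, ((S i).card : ℤ) = (α.parts i : ℤ) + ((σ i : ℕ) : ℤ) - ((i : ℕ) : ℤ)) from Iff.rfl]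
  unfold weightF
  split <;> rfl

-- basic lemmas about cnt and dnt
lemma cnt_add_dnt {n : ℕ} (s : Finset (Fin n)) (t : ℕ) : cnt s t + dnt s t = s.card := by
  classical
  rw [cnt, dnt]
  exact Finset.card_filter_add_card_filter_not _

lemma dnt_zero {n : ℕ} (s : Finset (Fin n)) : dnt s 0 = s.card := by
  classical
  rw [dnt]
  congr 1
  apply Finset.filter_true_of_mem
  intro x _
  omega

lemma dnt_of_ge {n : ℕ} (s : Finset (Fin n)) {t : ℕ} (h : n ≤ t) : dnt s t = 0 := by
  classical
  rw [dnt, Finset.card_eq_zero, Finset.filter_eq_empty_iff]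
  intro x _
  have := x.isLt
  omega

lemma dnt_anti {n : ℕ} (s : Finset (Fin n)) {t t' : ℕ} (h : t ≤ t') : dnt s t' ≤ dnt s t := by
  classical
  apply Finset.card_le_card
  intro x hx
  rw [Finset.mem_filter] at hx ⊢
  refine ⟨hx.1, by omega⟩

lemma dnt_step {n : ℕ} (s : Finset (Fin n)) (t : ℕ) : dnt s t ≤ dnt s (t + 1) + 1 := by
  classical
  rw [dnt, dnt]
  have hsplit : s.filter (fun x : Fin n => ¬ (x : ℕ) < t) ⊆
      s.filter (fun x : Fin n => ¬ (x : ℕ) < t + 1) ∪ s.filter (fun x : Fin n => (x : ℕ) = t) := by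
    intro x hx
    rw [Finset.mem_filter] at hx
    rw [Finset.mem_union, Finset.mem_filter, Finset.mem_filter]
    have h2 := hx.2
    by_cases hxt : (x : ℕ) = t
    · exact Or.inr ⟨hx.1, hxt⟩
    · exact Or.inl ⟨hx.1, by omega⟩
  calc (s.filter (fun x : Fin n => ¬ (x : ℕ) < t)).card
      ≤ (s.filter (fun x : Fin n => ¬ (x : ℕ) < t + 1) ∪
          s.filter (fun x : Fin n => (x : ℕ) = t)).card := Finset.card_le_card hsplit
    _ ≤ (s.filter (fun x : Fin n => ¬ (x : ℕ) < t + 1)).card +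
          (s.filter (fun x : Fin n => (x : ℕ) = t)).card := Finset.card_union_le _ _
    _ ≤ (s.filter (fun x : Fin n => ¬ (x : ℕ) < t + 1)).card + 1 := by
        have : (s.filter (fun x : Fin n => (x : ℕ) = t)).card ≤ 1 := by
          apply Finset.card_le_one.mpr
          intro x hx y hy
          rw [Finset.mem_filter] at hx hy
          apply Fin.val_injective
          rw [hx.2, hy.2]
        omega

def xpos (S : Fin a → Finset (Fin n)) (i : Fin a) (t : ℕ) : ℤ :=
  ((i : ℕ) : ℤ) - (α.parts i : ℤ) + (dnt (S i) t : ℤ)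

def TouchP (S : Fin a → Finset (Fin n)) (t : ℕ) : Prop :=
  ∃ i j : Fin a, i < j ∧ xpos n a α S i t = xpos n a α S j t

variable {n a α}

lemma xpos_of_ge {S : Fin a → Finset (Fin n)} {t : ℕ} (h : n ≤ t) (i : Fin a) :
    xpos n a α S i t = ((i : ℕ) : ℤ) - (α.parts i : ℤ) := by
  rw [xpos, dnt_of_ge _ h]
  push_cast
  ring

lemma start_strict {i j : Fin a} (hij : i < j) :
    ((i : ℕ) : ℤ) - (α.parts i : ℤ) < ((j : ℕ) : ℤ) - (α.parts j : ℤ) := by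
  have h1 : α.parts j ≤ α.parts i := α.antitone' (le_of_lt (by exact_mod_cast hij))
  have h2 : (i : ℕ) < (j : ℕ) := hij
  omega

lemma no_touch_of_ge {S : Fin a → Finset (Fin n)} {t : ℕ} (h : n ≤ t) :
    ¬ TouchP n a α S t := by
  rintro ⟨i, j, hij, heq⟩
  rw [xpos_of_ge h, xpos_of_ge h] at heq
  exact absurd heq (ne_of_lt (start_strict hij))

lemma sep_of_chain {S : Fin a → Finset (Fin n)} (hS : ChainF n a α S)
    {i j : Fin a} (hij : i < j) (t : ℕ) : xpos n a α S i t < xpos n a α S j t := by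
  have hi := cnt_add_dnt (S i) t
  have hj := cnt_add_dnt (S j) t
  have hci := hS.1 i
  have hcj := hS.1 j
  have hcnt := hS.2 i j (le_of_lt hij) t
  have hijn : (i : ℕ) < (j : ℕ) := hij
  rw [xpos, xpos]
  omega

lemma no_touch_of_good {S : Fin a → Finset (Fin n)} (hS : ChainF n a α S) (t : ℕ) :
    ¬ TouchP n a α S t := by
  rintro ⟨i, j, hij, heq⟩
  exact absurd heq (ne_of_lt (sep_of_chain hS hij t))

lemma good_of_no_touch {σ : Equiv.Perm (Fin a)} {S : Fin a → Finset (Fin n)}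
    (hc : Cons n a α σ S) (hNT : ∀ t, ¬ TouchP n a α S t) :
    σ = 1 ∧ ChainF n a α S := by
  have hsep : ∀ (i j : Fin a), i < j → ∀ t, xpos n a α S i t < xpos n a α S j t := by
    have key : ∀ (k t : ℕ), n ≤ t + k → ∀ (i j : Fin a), i < j →
        xpos n a α S i t < xpos n a α S j t := by
      intro k
      induction k with
      | zero =>
        intro t ht i j hij
        rw [xpos_of_ge (by omega), xpos_of_ge (by omega)]
        exact start_strict hij
      | succ k ih =>
        intro t ht i j hij
        have h1 := ih (t + 1) (by omega) i j hij
        have h2 : xpos n a α S i t ≤ xpos n a α S i (t + 1) + 1 := by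
          rw [xpos, xpos]
          have := dnt_step (S i) t
          omega
        have h3 : xpos n a α S j (t + 1) ≤ xpos n a α S j t := by
          rw [xpos, xpos]
          have := dnt_anti (S j) (by omega : t ≤ t + 1)
          omega
        have h4 : xpos n a α S i t ≤ xpos n a α S j t := by omega
        rcases lt_or_eq_of_le h4 with h5 | h5
        · exact h5
        · exact absurd ⟨i, j, hij, h5⟩ (hNT t)
    intro i j hij t
    exact key n t (by omega) i j hij
  have hx0 : ∀ i : Fin a, xpos n a α S i 0 = ((σ i : ℕ) : ℤ) := by
    intro i
    rw [xpos, dnt_zero]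
    have := hc i
    omega
  have hmono : StrictMono ⇑σ := by
    intro i j hij
    have := hsep i j hij 0
    rw [hx0 i, hx0 j] at this
    exact_mod_cast this
  have hσ : σ = 1 := by
    have hcard : (Finset.univ : Finset (Fin a)).card = a := by
      rw [Finset.card_univ, Fintype.card_fin]
    have e1 := Finset.orderEmbOfFin_unique hcard (f := ⇑σ)
      (fun x => Finset.mem_univ _) hmono
    have e2 := Finset.orderEmbOfFin_unique hcard (f := fun x : Fin a => x)
      (fun x => Finset.mem_univ _) strictMono_id
    apply Equiv.ext
    intro x
    rw [show σ x = (fun x : Fin a => x) x from by rw [e1, e2]]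
    rfl
  subst hσ
  have hcards : ∀ i, (S i).card = α.parts i := by
    intro i
    have := hc i
    simp only [Equiv.Perm.coe_one, id_eq] at this
    omega
  refine ⟨rfl, hcards, ?_⟩
  -- consecutive strict separation gives the counting chain condition
  have hcons : ∀ (i j : Fin a), ((j : ℕ) = (i : ℕ) + 1) → ∀ t, cnt (S j) t ≤ cnt (S i) t := by
    intro i j hji t
    have := hsep i j (by omega : (i:ℕ) < (j:ℕ)) t
    rw [xpos, xpos] at this
    have hi := cnt_add_dnt (S i) t
    have hj := cnt_add_dnt (S j) t
    have hci := hcards i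
    have hcj := hcards j
    omega
  have hext : ∀ (d : ℕ) (i j : Fin a), (j : ℕ) = (i : ℕ) + d → ∀ t, cnt (S j) t ≤ cnt (S i) t := by
    intro d
    induction d with
    | zero =>
      intro i j hji t
      have : i = j := Fin.ext (by omega)
      rw [this]
    | succ d ih =>
      intro i j hji t
      have hmid : ((i : ℕ) + d) < a := by
        have := j.isLt
        omega
      have h1 := ih i ⟨(i : ℕ) + d, hmid⟩ rfl t
      have h2 := hcons ⟨(i : ℕ) + d, hmid⟩ j (by simp; omega) t
      omega
  intro i j hij t
  exact hext ((j : ℕ) - (i : ℕ)) i j (by omega) t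

-- generic finset swap helpers
lemma giam_filter_disj {n t0 : ℕ} (A B : Finset (Fin n)) :
    Disjoint (A.filter (fun x : Fin n => ¬ (x : ℕ) < t0)) (B.filter (fun x : Fin n => (x : ℕ) < t0)) := by
  classical
  rw [Finset.disjoint_left]
  intro x hx hy
  rw [Finset.mem_filter] at hx hy
  omega

lemma giam_union_dnt {n : ℕ} (A B : Finset (Fin n)) {t0 t : ℕ} (h : t0 ≤ t) :
    dnt ((A.filter (fun x : Fin n => ¬ (x : ℕ) < t0)) ∪ (B.filter (fun x : Fin n => (x : ℕ) < t0))) t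
      = dnt A t := by
  classical
  rw [dnt, Finset.filter_union, Finset.filter_filter, Finset.filter_filter]
  have h1 : B.filter (fun x : Fin n => (x : ℕ) < t0 ∧ ¬ (x : ℕ) < t) = ∅ := by
    rw [Finset.filter_eq_empty_iff]
    intro x _
    omega
  have h2 : A.filter (fun x : Fin n => ¬ (x : ℕ) < t0 ∧ ¬ (x : ℕ) < t) =
      A.filter (fun x : Fin n => ¬ (x : ℕ) < t) := by
    apply Finset.filter_congr
    intro x _
    constructor
    · rintro ⟨_, h2⟩; exact h2
    · intro h2; exact ⟨by omega, h2⟩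
  rw [h1, h2, Finset.union_empty, dnt]

lemma giam_union_card {n : ℕ} (A B : Finset (Fin n)) (t0 : ℕ) :
    ((A.filter (fun x : Fin n => ¬ (x : ℕ) < t0)) ∪ (B.filter (fun x : Fin n => (x : ℕ) < t0))).card
      = dnt A t0 + cnt B t0 := by
  classical
  rw [Finset.card_union_of_disjoint (giam_filter_disj A B), dnt, cnt]

lemma giam_union_filter_ge {n : ℕ} (A B : Finset (Fin n)) (t0 : ℕ) :
    ((A.filter (fun x : Fin n => ¬ (x : ℕ) < t0)) ∪ (B.filter (fun x : Fin n => (x : ℕ) < t0))).filter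
        (fun x : Fin n => ¬ (x : ℕ) < t0) = A.filter (fun x : Fin n => ¬ (x : ℕ) < t0) := by
  classical
  rw [Finset.filter_union, Finset.filter_filter, Finset.filter_filter]
  have h1 : B.filter (fun x : Fin n => (x : ℕ) < t0 ∧ ¬ (x : ℕ) < t0) = ∅ := by
    rw [Finset.filter_eq_empty_iff]; intro x _; omega
  have h2 : A.filter (fun x : Fin n => ¬ (x : ℕ) < t0 ∧ ¬ (x : ℕ) < t0) =
      A.filter (fun x : Fin n => ¬ (x : ℕ) < t0) := by
    apply Finset.filter_congr; intro x _
    constructor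
    · rintro ⟨_, h⟩; exact h
    · intro h; exact ⟨h, h⟩
  rw [h1, h2, Finset.union_empty]

lemma giam_union_filter_lt {n : ℕ} (A B : Finset (Fin n)) (t0 : ℕ) :
    ((A.filter (fun x : Fin n => ¬ (x : ℕ) < t0)) ∪ (B.filter (fun x : Fin n => (x : ℕ) < t0))).filter
        (fun x : Fin n => (x : ℕ) < t0) = B.filter (fun x : Fin n => (x : ℕ) < t0) := by
  classical
  rw [Finset.filter_union, Finset.filter_filter, Finset.filter_filter]
  have h1 : A.filter (fun x : Fin n => ¬ (x : ℕ) < t0 ∧ (x : ℕ) < t0) = ∅ := by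
    rw [Finset.filter_eq_empty_iff]; intro x _; omega
  have h2 : B.filter (fun x : Fin n => (x : ℕ) < t0 ∧ (x : ℕ) < t0) =
      B.filter (fun x : Fin n => (x : ℕ) < t0) := by
    apply Finset.filter_congr; intro x _
    constructor
    · rintro ⟨_, h⟩; exact h
    · intro h; exact ⟨h, h⟩
  rw [h1, h2, Finset.empty_union]

lemma giam_filter_recomb {n : ℕ} (A : Finset (Fin n)) (t0 : ℕ) :
    (A.filter (fun x : Fin n => ¬ (x : ℕ) < t0)) ∪ (A.filter (fun x : Fin n => (x : ℕ) < t0)) = A := by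
  classical
  rw [Finset.union_comm]
  exact Finset.filter_union_filter_not_eq _ A

lemma giam_prod_pair {ι M : Type*} [Fintype ι] [DecidableEq ι] [CommMonoid M] {i j : ι}
    (hij : i ≠ j) {f g : ι → M} (hk : ∀ k, k ≠ i → k ≠ j → f k = g k)
    (hp : f i * f j = g i * g j) : ∏ k, f k = ∏ k, g k := by
  have hjmem : j ∈ (Finset.univ : Finset ι).erase i := Finset.mem_erase.mpr ⟨Ne.symm hij, Finset.mem_univ _⟩
  rw [← Finset.mul_prod_erase Finset.univ f (Finset.mem_univ i),
      ← Finset.mul_prod_erase _ f hjmem,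
      ← Finset.mul_prod_erase Finset.univ g (Finset.mem_univ i),
      ← Finset.mul_prod_erase _ g hjmem, ← mul_assoc, ← mul_assoc, hp]
  congr 1
  apply Finset.prod_congr rfl
  intro k hk2
  rw [Finset.mem_erase, Finset.mem_erase] at hk2
  exact hk k hk2.2.1 hk2.1

variable (n a α)

noncomputable def t0v (S : Fin a → Finset (Fin n)) : ℕ :=
  @Nat.findGreatest (fun t => TouchP n a α S t) (fun _ => Classical.propDecidable _) n

noncomputable def pairF (S : Fin a → Finset (Fin n)) : Finset (Fin a × Fin a) := by
  classical exact (Finset.univ ×ˢ Finset.univ).filter (fun q =>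
    q.1 < q.2 ∧ xpos n a α S q.1 (t0v n a α S) = xpos n a α S q.2 (t0v n a α S))

noncomputable def i0v (S : Fin a → Finset (Fin n)) (h : (pairF n a α S).Nonempty) : Fin a :=
  ((pairF n a α S).image Prod.fst).min' (h.image _)

noncomputable def j0v (S : Fin a → Finset (Fin n)) (h : (pairF n a α S).Nonempty) : Fin a :=
  (((pairF n a α S).filter (fun q => q.1 = i0v n a α S h)).image Prod.snd).min' (by
    classical
    apply Finset.Nonempty.image
    have hmem := Finset.min'_mem ((pairF n a α S).image Prod.fst) (h.image _)
    rw [Finset.mem_image] at hmem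
    obtain ⟨q, hq, hq1⟩ := hmem
    exact ⟨q, Finset.mem_filter.mpr ⟨hq, hq1⟩⟩)

variable {n a α}

lemma mem_pairF {S : Fin a → Finset (Fin n)} {q : Fin a × Fin a} :
    q ∈ pairF n a α S ↔ q.1 < q.2 ∧
      xpos n a α S q.1 (t0v n a α S) = xpos n a α S q.2 (t0v n a α S) := by
  rw [pairF]
  simp only [Finset.mem_filter, Finset.mem_product, Finset.mem_univ, and_true, true_and]

lemma pair_mem {S : Fin a → Finset (Fin n)} (h : (pairF n a α S).Nonempty) :
    (i0v n a α S h, j0v n a α S h) ∈ pairF n a α S := by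
  classical
  have hne : (((pairF n a α S).filter (fun q => q.1 = i0v n a α S h)).image Prod.snd).Nonempty := by
    apply Finset.Nonempty.image
    have hmem := Finset.min'_mem ((pairF n a α S).image Prod.fst) (h.image _)
    rw [Finset.mem_image] at hmem
    obtain ⟨q, hq, hq1⟩ := hmem
    exact ⟨q, Finset.mem_filter.mpr ⟨hq, hq1⟩⟩
  have hmem := Finset.min'_mem _ hne
  rw [Finset.mem_image] at hmem
  obtain ⟨q, hq, hq2⟩ := hmem
  rw [Finset.mem_filter] at hq
  have hq2' : q.2 = j0v n a α S h := hq2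
  have : q = (i0v n a α S h, j0v n a α S h) := Prod.ext hq.2 hq2'
  rw [← this]
  exact hq.1

lemma i0v_lt_j0v {S : Fin a → Finset (Fin n)} (h : (pairF n a α S).Nonempty) :
    i0v n a α S h < j0v n a α S h := (mem_pairF.mp (pair_mem h)).1

lemma touch_eq_i0j0 {S : Fin a → Finset (Fin n)} (h : (pairF n a α S).Nonempty) :
    xpos n a α S (i0v n a α S h) (t0v n a α S) =
      xpos n a α S (j0v n a α S h) (t0v n a α S) := (mem_pairF.mp (pair_mem h)).2

lemma t0v_le {S : Fin a → Finset (Fin n)} : t0v n a α S ≤ n := by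
  rw [t0v]; exact @Nat.findGreatest_le _ (fun _ => Classical.propDecidable _) n

lemma t0v_greatest {S : Fin a → Finset (Fin n)} {t : ℕ} (ht : t0v n a α S < t) :
    ¬ TouchP n a α S t := by
  classical
  by_cases htn : t ≤ n
  · rw [t0v] at ht
    exact @Nat.findGreatest_is_greatest _ _ (fun _ => Classical.propDecidable _) _ ht htn
  · exact no_touch_of_ge (by omega)

lemma pairF_nonempty {S : Fin a → Finset (Fin n)} (hex : ∃ t, TouchP n a α S t) :
    (pairF n a α S).Nonempty := by
  classical
  obtain ⟨t, ht⟩ := hex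
  have htn : t ≤ n := by
    by_contra hc
    exact no_touch_of_ge (by omega) ht
  have ht0 : TouchP n a α S (t0v n a α S) := by
    rw [t0v]
    exact @Nat.findGreatest_spec _ _ (fun _ => Classical.propDecidable _) _ htn ht
  obtain ⟨i, j, hij, heq⟩ := ht0
  exact ⟨(i, j), mem_pairF.mpr ⟨hij, heq⟩⟩

variable (n a α)

noncomputable def swapS (S : Fin a → Finset (Fin n)) (h : (pairF n a α S).Nonempty) :
    Fin a → Finset (Fin n) := by
  classical
  exact fun k =>
    if k = i0v n a α S h then
      ((S (i0v n a α S h)).filter (fun x : Fin n => ¬ (x : ℕ) < t0v n a α S)) ∪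
        ((S (j0v n a α S h)).filter (fun x : Fin n => (x : ℕ) < t0v n a α S))
    else if k = j0v n a α S h then
      ((S (j0v n a α S h)).filter (fun x : Fin n => ¬ (x : ℕ) < t0v n a α S)) ∪
        ((S (i0v n a α S h)).filter (fun x : Fin n => (x : ℕ) < t0v n a α S))
    else S k

variable {n a α}

lemma swapS_i0 {S : Fin a → Finset (Fin n)} (h : (pairF n a α S).Nonempty) :
    swapS n a α S h (i0v n a α S h) =
      ((S (i0v n a α S h)).filter (fun x : Fin n => ¬ (x : ℕ) < t0v n a α S)) ∪
        ((S (j0v n a α S h)).filter (fun x : Fin n => (x : ℕ) < t0v n a α S)) := by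
  simp only [swapS]
  rw [if_pos trivial]

lemma swapS_j0 {S : Fin a → Finset (Fin n)} (h : (pairF n a α S).Nonempty) :
    swapS n a α S h (j0v n a α S h) =
      ((S (j0v n a α S h)).filter (fun x : Fin n => ¬ (x : ℕ) < t0v n a α S)) ∪
        ((S (i0v n a α S h)).filter (fun x : Fin n => (x : ℕ) < t0v n a α S)) := by
  have hne : j0v n a α S h ≠ i0v n a α S h := (i0v_lt_j0v h).ne'
  simp only [swapS]
  rw [if_neg hne, if_pos trivial]

lemma swapS_other {S : Fin a → Finset (Fin n)} (h : (pairF n a α S).Nonempty)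
    {k : Fin a} (hk1 : k ≠ i0v n a α S h) (hk2 : k ≠ j0v n a α S h) :
    swapS n a α S h k = S k := by
  simp only [swapS]
  rw [if_neg hk1, if_neg hk2]

lemma min'_congr' {β : Type*} [LinearOrder β] {s t : Finset β} (hst : s = t)
    (hs : s.Nonempty) (ht : t.Nonempty) : s.min' hs = t.min' ht := by
  subst hst; rfl

lemma dnt_swapS_ge {S : Fin a → Finset (Fin n)} (h : (pairF n a α S).Nonempty)
    {t : ℕ} (ht : t0v n a α S ≤ t) (k : Fin a) :
    dnt (swapS n a α S h k) t = dnt (S k) t := by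
  by_cases hk1 : k = i0v n a α S h
  · subst hk1
    rw [swapS_i0 h]
    exact giam_union_dnt _ _ ht
  by_cases hk2 : k = j0v n a α S h
  · subst hk2
    rw [swapS_j0 h]
    exact giam_union_dnt _ _ ht
  · rw [swapS_other h hk1 hk2]

lemma xpos_swapS_ge {S : Fin a → Finset (Fin n)} (h : (pairF n a α S).Nonempty)
    {t : ℕ} (ht : t0v n a α S ≤ t) (k : Fin a) :
    xpos n a α (swapS n a α S h) k t = xpos n a α S k t := by
  rw [xpos, xpos, dnt_swapS_ge h ht]

lemma touch_swapS_ge {S : Fin a → Finset (Fin n)} (h : (pairF n a α S).Nonempty)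
    {t : ℕ} (ht : t0v n a α S ≤ t) :
    TouchP n a α (swapS n a α S h) t ↔ TouchP n a α S t := by
  constructor
  · rintro ⟨i, j, hij, heq⟩
    rw [xpos_swapS_ge h ht, xpos_swapS_ge h ht] at heq
    exact ⟨i, j, hij, heq⟩
  · rintro ⟨i, j, hij, heq⟩
    rw [← xpos_swapS_ge h ht i, ← xpos_swapS_ge h ht j] at heq
    exact ⟨i, j, hij, heq⟩

lemma t0v_swapS {S : Fin a → Finset (Fin n)} (h : (pairF n a α S).Nonempty) :
    t0v n a α (swapS n a α S h) = t0v n a α S := by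
  have htouch : TouchP n a α (swapS n a α S h) (t0v n a α S) := by
    rw [touch_swapS_ge h le_rfl]
    exact ⟨_, _, i0v_lt_j0v h, touch_eq_i0j0 h⟩
  classical
  rw [t0v, Nat.findGreatest_eq_iff]
  refine ⟨t0v_le, fun _ => htouch, ?_⟩
  intro t ht htn
  rw [touch_swapS_ge h (le_of_lt ht)]
  exact t0v_greatest ht

lemma pairF_swapS {S : Fin a → Finset (Fin n)} (h : (pairF n a α S).Nonempty) :
    pairF n a α (swapS n a α S h) = pairF n a α S := by
  ext q
  rw [mem_pairF, mem_pairF, t0v_swapS h, xpos_swapS_ge h le_rfl, xpos_swapS_ge h le_rfl]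

lemma i0v_swapS {S : Fin a → Finset (Fin n)} (h : (pairF n a α S).Nonempty)
    (h' : (pairF n a α (swapS n a α S h)).Nonempty) :
    i0v n a α (swapS n a α S h) h' = i0v n a α S h := by
  rw [i0v, i0v]
  apply min'_congr'
  rw [pairF_swapS h]

lemma j0v_swapS {S : Fin a → Finset (Fin n)} (h : (pairF n a α S).Nonempty)
    (h' : (pairF n a α (swapS n a α S h)).Nonempty) :
    j0v n a α (swapS n a α S h) h' = j0v n a α S h := by
  rw [j0v, j0v]
  apply min'_congr'
  rw [pairF_swapS h, i0v_swapS h h']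

lemma swapS_involutive {S : Fin a → Finset (Fin n)} (h : (pairF n a α S).Nonempty)
    (h' : (pairF n a α (swapS n a α S h)).Nonempty) :
    swapS n a α (swapS n a α S h) h' = S := by
  funext k
  by_cases hk1 : k = i0v n a α S h
  · subst hk1
    rw [(i0v_swapS h h').symm, swapS_i0 h', i0v_swapS h h', j0v_swapS h h', t0v_swapS h,
      swapS_i0 h, swapS_j0 h, giam_union_filter_ge, giam_union_filter_lt]
    exact giam_filter_recomb _ _
  by_cases hk2 : k = j0v n a α S h
  · subst hk2
    rw [(j0v_swapS h h').symm, swapS_j0 h', i0v_swapS h h', j0v_swapS h h', t0v_swapS h,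
      swapS_i0 h, swapS_j0 h, giam_union_filter_ge, giam_union_filter_lt]
    exact giam_filter_recomb _ _
  · rw [swapS_other h' (by rw [i0v_swapS h h']; exact hk1) (by rw [j0v_swapS h h']; exact hk2)]
    exact swapS_other h hk1 hk2

lemma cons_swapS {σ : Equiv.Perm (Fin a)} {S : Fin a → Finset (Fin n)}
    (h : (pairF n a α S).Nonempty) (hc : Cons n a α σ S) :
    Cons n a α (σ * Equiv.swap (i0v n a α S h) (j0v n a α S h)) (swapS n a α S h) := by
  intro k
  have htouch := touch_eq_i0j0 h
  rw [xpos, xpos] at htouch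
  have hci := hc (i0v n a α S h)
  have hcj := hc (j0v n a α S h)
  have hcnti := cnt_add_dnt (S (i0v n a α S h)) (t0v n a α S)
  have hcntj := cnt_add_dnt (S (j0v n a α S h)) (t0v n a α S)
  by_cases hk1 : k = i0v n a α S h
  · subst hk1
    rw [swapS_i0 h, giam_union_card]
    rw [Equiv.Perm.mul_apply, Equiv.swap_apply_left]
    push_cast
    omega
  by_cases hk2 : k = j0v n a α S h
  · subst hk2
    rw [swapS_j0 h, giam_union_card]
    rw [Equiv.Perm.mul_apply, Equiv.swap_apply_right]
    push_cast
    omega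
  · rw [swapS_other h hk1 hk2, Equiv.Perm.mul_apply, Equiv.swap_apply_of_ne_of_ne hk1 hk2]
    exact hc k

lemma weight_swapS {S : Fin a → Finset (Fin n)} (h : (pairF n a α S).Nonempty) :
    weightF n a (swapS n a α S h) = weightF n a S := by
  classical
  rw [weightF, weightF]
  apply giam_prod_pair (i0v_lt_j0v h).ne
    (i := i0v n a α S h) (j := j0v n a α S h)
  · intro k hk1 hk2
    rw [swapS_other h hk1 hk2]
  · rw [swapS_i0 h, swapS_j0 h, Finset.prod_union (giam_filter_disj _ _),
      Finset.prod_union (giam_filter_disj _ _)]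
    conv_rhs => rw [← giam_filter_recomb (S (i0v n a α S h)) (t0v n a α S),
      ← giam_filter_recomb (S (j0v n a α S h)) (t0v n a α S)]
    rw [Finset.prod_union (giam_filter_disj _ _), Finset.prod_union (giam_filter_disj _ _)]
    ring

variable (n a α)

noncomputable def badF : Finset (Equiv.Perm (Fin a) × (Fin a → Finset (Fin n))) := by
  classical
  exact (Finset.univ ×ˢ Finset.univ).filter
    (fun p => ¬ (p.1 = 1 ∧ ChainF n a α p.2))

variable {n a α}

lemma mem_badF {p : Equiv.Perm (Fin a) × (Fin a → Finset (Fin n))} :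
    p ∈ badF n a α ↔ ¬ (p.1 = 1 ∧ ChainF n a α p.2) := by
  rw [badF]
  simp only [Finset.mem_filter, Finset.mem_product, Finset.mem_univ, and_true, true_and]

lemma hne_of {p : Equiv.Perm (Fin a) × (Fin a → Finset (Fin n))} (hp : p ∈ badF n a α)
    (hc : Cons n a α p.1 p.2) : (pairF n a α p.2).Nonempty := by
  apply pairF_nonempty
  by_contra hnt
  push_neg at hnt
  exact (mem_badF.mp hp) (good_of_no_touch hc fun t => hnt t)

variable (n a α)

noncomputable def gswap (p : Equiv.Perm (Fin a) × (Fin a → Finset (Fin n)))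
    (hp : p ∈ badF n a α) : Equiv.Perm (Fin a) × (Fin a → Finset (Fin n)) :=
  @dite _ (Cons n a α p.1 p.2) (Classical.propDecidable _) (fun hc =>
    (p.1 * Equiv.swap (i0v n a α p.2 (hne_of hp hc)) (j0v n a α p.2 (hne_of hp hc)),
      swapS n a α p.2 (hne_of hp hc))) (fun _ => p)

variable {n a α}

lemma gswap_fixes {p : Equiv.Perm (Fin a) × (Fin a → Finset (Fin n))} (hp : p ∈ badF n a α)
    (hc : ¬ Cons n a α p.1 p.2) : gswap n a α p hp = p := by
  rw [gswap, dif_neg hc]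

lemma gswap_moves {p : Equiv.Perm (Fin a) × (Fin a → Finset (Fin n))} (hp : p ∈ badF n a α)
    (hc : Cons n a α p.1 p.2) : gswap n a α p hp =
      (p.1 * Equiv.swap (i0v n a α p.2 (hne_of hp hc)) (j0v n a α p.2 (hne_of hp hc)),
        swapS n a α p.2 (hne_of hp hc)) := by
  rw [gswap, dif_pos hc]

lemma FF_gswap_cancel {p : Equiv.Perm (Fin a) × (Fin a → Finset (Fin n))}
    (hp : p ∈ badF n a α) : FF n a α p + FF n a α (gswap n a α p hp) = 0 := by
  by_cases hc : Cons n a α p.1 p.2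
  · rw [gswap_moves hp hc]
    rw [FF, FF]
    have hc2 := cons_swapS (hne_of hp hc) hc
    rw [if_pos hc, if_pos hc2]
    rw [weight_swapS (hne_of hp hc)]
    have hsign : ((Equiv.Perm.sign (p.1 * Equiv.swap (i0v n a α p.2 (hne_of hp hc))
        (j0v n a α p.2 (hne_of hp hc))) : ℤ) : MvPolynomial (Fin n) ℤ) =
        -((Equiv.Perm.sign p.1 : ℤ) : MvPolynomial (Fin n) ℤ) := by
      rw [Equiv.Perm.sign_mul, Equiv.Perm.sign_swap (i0v_lt_j0v (hne_of hp hc)).ne]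
      push_cast
      ring
    rw [hsign]
    ring
  · rw [gswap_fixes hp hc, FF, if_neg hc, mul_zero]
    ring

lemma gswap_ne {p : Equiv.Perm (Fin a) × (Fin a → Finset (Fin n))} (hp : p ∈ badF n a α)
    (hFF : FF n a α p ≠ 0) : gswap n a α p hp ≠ p := by
  by_cases hc : Cons n a α p.1 p.2
  · rw [gswap_moves hp hc]
    intro heq
    have h1 := congrArg Prod.fst heq
    simp only at h1
    have h2 : Equiv.swap (i0v n a α p.2 (hne_of hp hc)) (j0v n a α p.2 (hne_of hp hc)) = 1 := by
      have := congrArg (fun σ => p.1⁻¹ * σ) h1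
      simpa [← mul_assoc] using this
    have h3 := congrArg (fun σ : Equiv.Perm (Fin a) => σ (i0v n a α p.2 (hne_of hp hc))) h2
    simp only [Equiv.swap_apply_left, Equiv.Perm.coe_one, id_eq] at h3
    exact (i0v_lt_j0v (hne_of hp hc)).ne' h3
  · exact absurd (by rw [FF, if_neg hc, mul_zero]) hFF

lemma gswap_mem {p : Equiv.Perm (Fin a) × (Fin a → Finset (Fin n))} (hp : p ∈ badF n a α) :
    gswap n a α p hp ∈ badF n a α := by
  by_cases hc : Cons n a α p.1 p.2
  · rw [gswap_moves hp hc, mem_badF]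
    rintro ⟨hσ', hchain'⟩
    simp only at hchain'
    apply no_touch_of_good hchain' (t0v n a α p.2)
    refine ⟨i0v n a α p.2 (hne_of hp hc), j0v n a α p.2 (hne_of hp hc),
      i0v_lt_j0v (hne_of hp hc), ?_⟩
    rw [xpos_swapS_ge (hne_of hp hc) le_rfl, xpos_swapS_ge (hne_of hp hc) le_rfl]
    exact touch_eq_i0j0 (hne_of hp hc)
  · rw [gswap_fixes hp hc]
    exact hp

lemma gswap_invol {p : Equiv.Perm (Fin a) × (Fin a → Finset (Fin n))} (hp : p ∈ badF n a α)
    (hp2 : gswap n a α p hp ∈ badF n a α) :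
    gswap n a α (gswap n a α p hp) hp2 = p := by
  by_cases hc : Cons n a α p.1 p.2
  · have key : ∀ (q : Equiv.Perm (Fin a) × (Fin a → Finset (Fin n))) (hq : q ∈ badF n a α),
        q = (p.1 * Equiv.swap (i0v n a α p.2 (hne_of hp hc)) (j0v n a α p.2 (hne_of hp hc)),
          swapS n a α p.2 (hne_of hp hc)) → gswap n a α q hq = p := by
      intro q hq hqe
      subst hqe
      have hc' : Cons n a α (p.1 * Equiv.swap (i0v n a α p.2 (hne_of hp hc))
          (j0v n a α p.2 (hne_of hp hc))) (swapS n a α p.2 (hne_of hp hc)) :=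
        cons_swapS (hne_of hp hc) hc
      rw [gswap_moves hq hc']
      apply Prod.ext
      · simp only
        rw [i0v_swapS (hne_of hp hc), j0v_swapS (hne_of hp hc), mul_assoc,
          Equiv.swap_mul_self, mul_one]
      · simp only
        exact swapS_involutive (hne_of hp hc) _
    exact key _ hp2 (by rw [gswap_moves hp hc])
  · have he : gswap n a α p hp = p := gswap_fixes hp hc
    have key : ∀ (q : Equiv.Perm (Fin a) × (Fin a → Finset (Fin n))) (hq : q ∈ badF n a α),
        q = p → gswap n a α q hq = p := by
      intro q hq hqe
      subst hqe
      exact gswap_fixes hq hc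
    exact key _ hp2 he

lemma bad_sum_zero : ∑ p ∈ badF n a α, FF n a α p = 0 := by
  classical
  exact Finset.sum_involution (gswap n a α) (fun p hp => FF_gswap_cancel hp)
    (fun p hp => gswap_ne hp) (fun p hp => gswap_mem hp) (fun p hp => gswap_invol hp _)

variable (n a α)

noncomputable def goodF : Finset (Equiv.Perm (Fin a) × (Fin a → Finset (Fin n))) := by
  classical
  exact (Finset.univ ×ˢ Finset.univ).filter
    (fun p => p.1 = 1 ∧ ChainF n a α p.2)

variable {n a α}

lemma good_sum_eq : ∑ p ∈ goodF n a α, FF n a α p =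
    ∑ S ∈ chainFinset n a α, weightF n a S := by
  rw [goodF]
  classical
  refine Finset.sum_nbij' (i := fun p => p.2) (j := fun S => (1, S)) ?_ ?_ ?_ ?_ ?_
  · intro p hp
    rw [Finset.mem_filter] at hp
    rw [mem_chainFinset]
    exact hp.2.2
  · intro S hS
    rw [mem_chainFinset] at hS
    rw [Finset.mem_filter]
    exact ⟨Finset.mem_product.mpr ⟨Finset.mem_univ _, Finset.mem_univ _⟩, rfl, hS⟩
  · intro p hp
    rw [Finset.mem_filter] at hp
    exact Prod.ext hp.2.1.symm rfl
  · intro S hS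
    rfl
  · intro p hp
    rw [Finset.mem_filter] at hp
    obtain ⟨_, h1, hchain⟩ := hp
    rw [FF]
    have hcons : Cons n a α p.1 p.2 := by
      intro i
      rw [h1]
      have := hchain.1 i
      simp only [Equiv.Perm.coe_one, id_eq]
      omega
    rw [if_pos hcons, h1]
    simp only [Equiv.Perm.sign_one]
    push_cast
    ring

end GiamAux

/-- **Dual Giambelli formula.** For a partition `α` with at most `a` parts, the Schur
polynomial of the conjugate partition is
`π_{ᾱ} = det[ε_{α_i + j - i}]_{i,j=1}^a`. -/

theorem giambelli (n a : ℕ) (α : Partn) (hα : ∀ i, a ≤ i → α.parts i = 0) :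
    schur n α.conj =
      Matrix.det (Matrix.of fun i j : Fin a =>
        esymmZ n ((α.parts i : ℤ) + (j : ℕ) - (i : ℕ))) := by
  classical
  rw [GiamAux.det_eq n a α]
  have h2 : ∑ p ∈ (Finset.univ ×ˢ Finset.univ :
      Finset (Equiv.Perm (Fin a) × (Fin a → Finset (Fin n)))), GiamAux.FF n a α p =
      (∑ p ∈ GiamAux.goodF n a α, GiamAux.FF n a α p) +
      (∑ p ∈ GiamAux.badF n a α, GiamAux.FF n a α p) := by
    rw [← Finset.sum_filter_add_sum_filter_not (Finset.univ ×ˢ Finset.univ)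
      (fun p : Equiv.Perm (Fin a) × (Fin a → Finset (Fin n)) =>
        p.1 = 1 ∧ GiamAux.ChainF n a α p.2) (GiamAux.FF n a α)]
    rw [GiamAux.goodF, GiamAux.badF]
  rw [h2, GiamAux.bad_sum_zero, add_zero, GiamAux.good_sum_eq, ← GiamAux.schur_eq n a α hα]
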